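/- Let M1 be a finite set of positive integers and let a be a positive integer with a > 1. Every atomic divisor of M1 ∪ {a} is of one of the forms gcd(v, a), the a'-part of v (i.e., v divided by the largest divisor of v all of whose prime factors divide a), or the M1'-part of a, for some atomic divisor v of M1, whenever that quantity exceeds 1. -/
import Mathlib


/-- An atomic divisor of `M`: a maximal (w.r.t. divisibility) integer `d > 1`
dividing some element of `M` such that every element of `M` is either
divisible by `d` or coprime to `d`. -/
def AtomicDiv (M : Finset ℕ) (d : ℕ) : Prop :=
  1 < d ∧ (∃ m ∈ M, d ∣ m) ∧ (∀ m ∈ M, d ∣ m ∨ Nat.Coprime d m) ∧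
    ∀ e : ℕ, 1 < e → (∃ m ∈ M, e ∣ m) → (∀ m ∈ M, e ∣ m ∨ Nat.Coprime e m) →
      d ∣ e → d = e

/-- The `ν`-part of `r`: the greatest divisor of `r` all of whose prime
factors divide some element of `ν`. -/
def nuPart (ν : Finset ℕ) (r : ℕ) : ℕ :=
  ∏ p ∈ r.primeFactors.filter (fun p => ∃ n ∈ ν, p ∣ n), p ^ (r.factorization p)

lemma nuPart_mul_compl (ν : Finset ℕ) (r : ℕ) (hr : r ≠ 0) :
    nuPart ν r * ∏ p ∈ r.primeFactors.filter (fun p => ¬ ∃ n ∈ ν, p ∣ n),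
      p ^ (r.factorization p) = r := by
  classical
  rw [nuPart, Finset.prod_filter_mul_prod_filter_not]
  have := Nat.factorization_prod_pow_eq_self hr
  rwa [Finsupp.prod, Nat.support_factorization] at this

lemma prod_coprime {s : Finset ℕ} {f : ℕ → ℕ} {x : ℕ}
    (h : ∀ p ∈ s, Nat.Prime p ∧ ¬ p ∣ x) :
    Nat.Coprime (∏ p ∈ s, p ^ f p) x :=
  Nat.Coprime.prod_left fun p hp =>
    Nat.Coprime.pow_left _ (((h p hp).1.coprime_iff_not_dvd).mpr (h p hp).2)

lemma prod_pos' {s : Finset ℕ} {f : ℕ → ℕ} (h : ∀ p ∈ s, Nat.Prime p) :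
    0 < ∏ p ∈ s, p ^ f p :=
  Finset.prod_pos fun p hp => pow_pos (h p hp).pos _

lemma exists_atomic_ge (M1 : Finset ℕ) (hpos : ∀ m ∈ M1, 0 < m) (d : ℕ)
    (hd1 : 1 < d) (hdvd : ∃ m ∈ M1, d ∣ m)
    (hprop : ∀ m ∈ M1, d ∣ m ∨ Nat.Coprime d m) :
    ∃ v, AtomicDiv M1 v ∧ d ∣ v := by
  classical
  set B := M1.sup id with hB
  set P : ℕ → Prop := fun e => 1 < e ∧ (∃ m ∈ M1, e ∣ m) ∧
    (∀ m ∈ M1, e ∣ m ∨ Nat.Coprime e m) ∧ d ∣ e with hP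
  have hbound : ∀ e, P e → e ≤ B := by
    rintro e ⟨_, ⟨m, hm, hem⟩, _, _⟩
    exact (Nat.le_of_dvd (hpos m hm) hem).trans (Finset.le_sup (f := id) hm)
  have hPd : P d := ⟨hd1, hdvd, hprop, dvd_rfl⟩
  set v := Nat.findGreatest P B with hv
  have hvP : P v := Nat.findGreatest_spec (hbound d hPd) hPd
  obtain ⟨hv1, hvdvd, hvprop, hdv⟩ := hvP
  refine ⟨v, ⟨hv1, hvdvd, hvprop, ?_⟩, hdv⟩
  intro e he1 hedvd heprop hve
  have hPe : P e := ⟨he1, hedvd, heprop, hdv.trans hve⟩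
  have h1 : e ≤ v := Nat.le_findGreatest (hbound e hPe) hPe
  have h2 : v ≤ e := Nat.le_of_dvd (lt_trans Nat.zero_lt_one he1) hve
  omega

theorem stmt_8 (M1 : Finset ℕ) (hpos : ∀ m ∈ M1, 0 < m) (a : ℕ) (ha : 1 < a)
    (d : ℕ) (hd : AtomicDiv (M1 ∪ {a}) d) :
    (∃ v : ℕ, AtomicDiv M1 v ∧ (d = Nat.gcd v a ∨ d = v / nuPart {a} v)) ∨
      d = a / nuPart M1 a := by
  classical
  obtain ⟨hd1, hdvdM, hpropM, hmax⟩ := hd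
  have haM : a ∈ M1 ∪ {a} := Finset.mem_union_right _ (Finset.mem_singleton_self a)
  by_cases hC : ∀ m ∈ M1, Nat.Coprime d m
  · -- Case C : d coprime to every element of M1
    right
    have hda : d ∣ a := by
      obtain ⟨m, hm, hdm⟩ := hdvdM
      rcases Finset.mem_union.mp hm with h | h
      · exfalso
        have h1 : Nat.gcd d m = d := Nat.gcd_eq_left hdm
        have h2 : Nat.gcd d m = 1 := hC m h
        omega
      · rwa [Finset.mem_singleton.mp h] at hdm
    set e := ∏ p ∈ a.primeFactors.filter (fun p => ¬ ∃ n ∈ M1, p ∣ n),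
      p ^ (a.factorization p) with he
    have hmul : nuPart M1 a * e = a := nuPart_mul_compl M1 a (by omega)
    have hepos : 0 < e :=
      prod_pos' fun p hp => Nat.prime_of_mem_primeFactors (Finset.mem_filter.mp hp).1
    have hcop : Nat.Coprime d (nuPart M1 a) := by
      refine Nat.Coprime.symm (prod_coprime ?_)
      rintro p hp
      obtain ⟨hp1, n, hn, hpn⟩ := Finset.mem_filter.mp hp
      have hprime := Nat.prime_of_mem_primeFactors hp1
      refine ⟨hprime, fun hpd => ?_⟩
      have hg : p ∣ Nat.gcd d n := Nat.dvd_gcd hpd hpn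
      rw [hC n hn] at hg
      exact hprime.one_lt.ne' (Nat.dvd_one.mp hg)
    have hde : d ∣ e := by
      rw [← hmul] at hda
      exact hcop.dvd_of_dvd_mul_left hda
    have he1 : 1 < e := lt_of_lt_of_le hd1 (Nat.le_of_dvd hepos hde)
    have hea : e ∣ a := Dvd.intro_left _ hmul
    have heq : d = e := by
      refine hmax e he1 ⟨a, haM, hea⟩ ?_ hde
      intro m hm
      rcases Finset.mem_union.mp hm with h | h
      · right
        refine prod_coprime ?_
        intro p hp
        obtain ⟨hp1, hp2⟩ := Finset.mem_filter.mp hp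
        exact ⟨Nat.prime_of_mem_primeFactors hp1, fun hpm => hp2 ⟨m, h, hpm⟩⟩
      · left; rwa [Finset.mem_singleton.mp h]
    have hnp : 0 < nuPart M1 a := by
      rcases Nat.eq_zero_or_pos (nuPart M1 a) with h | h
      · rw [h, zero_mul] at hmul; omega
      · exact h
    rw [heq]
    exact (Nat.div_eq_of_eq_mul_right hnp hmul.symm).symm
  · -- there is m0 ∈ M1 not coprime to d, hence d ∣ m0
    push_neg at hC
    obtain ⟨m0, hm0, hncop⟩ := hC
    have hdm0 : d ∣ m0 := by
      rcases hpropM m0 (Finset.mem_union_left _ hm0) with h | h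
      · exact h
      · exact absurd h hncop
    obtain ⟨v, hv, hdv⟩ := exists_atomic_ge M1 hpos d hd1 ⟨m0, hm0, hdm0⟩
      (fun m hm => hpropM m (Finset.mem_union_left _ hm))
    have hvA := hv
    obtain ⟨hv1, ⟨m1, hm1, hvm1⟩, hvprop, _⟩ := hvA
    left
    refine ⟨v, hv, ?_⟩
    rcases hpropM a haM with hda | hcopa
    · -- d ∣ a : d = gcd v a
      left
      refine hmax (Nat.gcd v a) ?_ ⟨a, haM, Nat.gcd_dvd_right _ _⟩ ?_
        (Nat.dvd_gcd hdv hda)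
      · have : 0 < Nat.gcd v a := Nat.gcd_pos_of_pos_right _ (by omega)
        exact lt_of_lt_of_le hd1 (Nat.le_of_dvd this (Nat.dvd_gcd hdv hda))
      · intro m hm
        rcases Finset.mem_union.mp hm with h | h
        · rcases hvprop m h with h' | h'
          · exact Or.inl ((Nat.gcd_dvd_left _ _).trans h')
          · exact Or.inr (Nat.Coprime.coprime_dvd_left (Nat.gcd_dvd_left _ _) h')
        · rw [Finset.mem_singleton.mp h]; exact Or.inl (Nat.gcd_dvd_right _ _)
    · -- d coprime to a : d = v / nuPart {a} v
      right
      set e := ∏ p ∈ v.primeFactors.filter (fun p => ¬ ∃ n ∈ ({a} : Finset ℕ), p ∣ n),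
        p ^ (v.factorization p) with he
      have hmul : nuPart {a} v * e = v := nuPart_mul_compl {a} v (by omega)
      have hepos : 0 < e :=
        prod_pos' fun p hp => Nat.prime_of_mem_primeFactors (Finset.mem_filter.mp hp).1
      have hcop : Nat.Coprime d (nuPart {a} v) := by
        refine Nat.Coprime.symm (prod_coprime ?_)
        rintro p hp
        obtain ⟨hp1, n, hn, hpn⟩ := Finset.mem_filter.mp hp
        have hprime := Nat.prime_of_mem_primeFactors hp1
        rw [Finset.mem_singleton.mp hn] at hpn
        refine ⟨hprime, fun hpd => ?_⟩
        have hg : p ∣ Nat.gcd d a := Nat.dvd_gcd hpd hpn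
        rw [hcopa] at hg
        exact hprime.one_lt.ne' (Nat.dvd_one.mp hg)
      have hde : d ∣ e := by
        have : d ∣ nuPart {a} v * e := by rw [hmul]; exact hdv
        exact hcop.dvd_of_dvd_mul_left this
      have hev : e ∣ v := Dvd.intro_left _ hmul
      have he1 : 1 < e := lt_of_lt_of_le hd1 (Nat.le_of_dvd hepos hde)
      have heq : d = e := by
        refine hmax e he1 ⟨m1, Finset.mem_union_left _ hm1, hev.trans hvm1⟩ ?_ hde
        intro m hm
        rcases Finset.mem_union.mp hm with h | h
        · rcases hvprop m h with h' | h'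
          · exact Or.inl (hev.trans h')
          · exact Or.inr (Nat.Coprime.coprime_dvd_left hev h')
        · rw [Finset.mem_singleton.mp h]
          right
          refine prod_coprime ?_
          intro p hp
          obtain ⟨hp1, hp2⟩ := Finset.mem_filter.mp hp
          exact ⟨Nat.prime_of_mem_primeFactors hp1,
            fun hpa => hp2 ⟨a, Finset.mem_singleton_self a, hpa⟩⟩
      have hnp : 0 < nuPart {a} v := by
        rcases Nat.eq_zero_or_pos (nuPart {a} v) with h | h
        · rw [h, zero_mul] at hmul; omega
        · exact h
      rw [heq]
      exact (Nat.div_eq_of_eq_mul_right hnp hmul.symm).symm
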